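/- (In randomized trials with non-compliance, the DMLIV loss coincides with the re-weighted DRIV loss at zero preliminary effect.) Under the binary intent-to-treat setup, for every bounded measurable function θ of X, E[( (Y − q0(X))·(Z − 1/2) − θ(X)·β0(X) )²] = (1/4)·E[( Y − q0(X) − θ(X)·(h0(Z,X) − p0(X)) )²]; i.e., the re-weighted DRIV loss with preliminary effect θ_pre = 0 equals one quarter of the DMLIV loss L¹(θ; q0, h0, p0). -/

import Mathlib

open MeasureTheory

lemma intg_of_bdd {Ω : Type*} {mΩ : MeasurableSpace Ω} {μ : Measure Ω} [IsFiniteMeasure μ]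
    {f : Ω → ℝ} (hf : @Measurable Ω ℝ mΩ _ f) (h : ∃ C, ∀ ω, |f ω| ≤ C) :
    Integrable f μ := by
  obtain ⟨C, hC⟩ := h
  exact (integrable_const C).mono' hf.aestronglyMeasurable
    (Filter.Eventually.of_forall fun ω => by simpa [Real.norm_eq_abs] using hC ω)

lemma bdd_mul' {Ω : Type*} {f g : Ω → ℝ} (hf : ∃ C, ∀ ω, |f ω| ≤ C)
    (hg : ∃ C, ∀ ω, |g ω| ≤ C) : ∃ C, ∀ ω, |f ω * g ω| ≤ C := by
  obtain ⟨C, hC⟩ := hf; obtain ⟨D, hD⟩ := hg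
  refine ⟨C * D, fun ω => ?_⟩
  rw [abs_mul]
  exact mul_le_mul (hC ω) (hD ω) (abs_nonneg _) ((abs_nonneg _).trans (hC ω))

lemma bdd_sub' {Ω : Type*} {f g : Ω → ℝ} (hf : ∃ C, ∀ ω, |f ω| ≤ C)
    (hg : ∃ C, ∀ ω, |g ω| ≤ C) : ∃ C, ∀ ω, |f ω - g ω| ≤ C := by
  obtain ⟨C, hC⟩ := hf; obtain ⟨D, hD⟩ := hg
  refine ⟨C + D, fun ω => ?_⟩
  calc |f ω - g ω| ≤ |f ω| + |g ω| := abs_sub _ _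
    _ ≤ C + D := add_le_add (hC ω) (hD ω)

theorem stmt_16
    {Ω 𝓧 : Type*} [MeasurableSpace Ω] [MeasurableSpace 𝓧] [StandardBorelSpace 𝓧]
    (μ : Measure Ω) [IsProbabilityMeasure μ]
    (Y T Z : Ω → ℝ) (X : Ω → 𝓧)
    (hY : Measurable Y) (hT : Measurable T) (hZ : Measurable Z) (hX : Measurable X)
    (hYbdd : ∃ C, ∀ ω, |Y ω| ≤ C) (hTbdd : ∃ C, ∀ ω, |T ω| ≤ C)
    (hZbdd : ∃ C, ∀ ω, |Z ω| ≤ C)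
    (θ0 f0 : 𝓧 → ℝ) (hθ0m : Measurable θ0) (hf0m : Measurable f0)
    (hθ0bdd : ∃ C, ∀ x, |θ0 x| ≤ C) (hf0bdd : ∃ C, ∀ x, |f0 x| ≤ C)
    (hIV : μ[fun ω => Y ω - θ0 (X ω) * T ω - f0 (X ω) |
        MeasurableSpace.comap (fun ω => (Z ω, X ω)) inferInstance] =ᵐ[μ] 0)
    (q0 p0 r0 : 𝓧 → ℝ) (hq0m : Measurable q0) (hp0m : Measurable p0) (hr0m : Measurable r0)
    (hq0bdd : ∃ C, ∀ x, |q0 x| ≤ C) (hp0bdd : ∃ C, ∀ x, |p0 x| ≤ C)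
    (hr0bdd : ∃ C, ∀ x, |r0 x| ≤ C)
    (hq0 : (fun ω => q0 (X ω)) =ᵐ[μ] μ[Y | MeasurableSpace.comap X inferInstance])
    (hp0 : (fun ω => p0 (X ω)) =ᵐ[μ] μ[T | MeasurableSpace.comap X inferInstance])
    (hr0 : (fun ω => r0 (X ω)) =ᵐ[μ] μ[Z | MeasurableSpace.comap X inferInstance])
    (h0 : ℝ × 𝓧 → ℝ) (hh0m : Measurable h0) (hh0bdd : ∃ C, ∀ zx, |h0 zx| ≤ C)
    (hh0 : (fun ω => h0 (Z ω, X ω)) =ᵐ[μ]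
        μ[T | MeasurableSpace.comap (fun ω => (Z ω, X ω)) inferInstance])
    (β0 : 𝓧 → ℝ) (hβ0m : Measurable β0) (hβ0bdd : ∃ C, ∀ x, |β0 x| ≤ C)
    (hβ0 : (fun ω => β0 (X ω)) =ᵐ[μ]
        μ[fun ω => (T ω - p0 (X ω)) * (Z ω - r0 (X ω)) | MeasurableSpace.comap X inferInstance])
    (V0 : 𝓧 → ℝ) (hV0m : Measurable V0) (hV0bdd : ∃ C, ∀ x, |V0 x| ≤ C)
    (hV0 : (fun ω => V0 (X ω)) =ᵐ[μ]
        μ[fun ω => (h0 (Z ω, X ω) - p0 (X ω)) ^ 2 | MeasurableSpace.comap X inferInstance])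
    (hZ01 : ∀ ω, Z ω = 0 ∨ Z ω = 1) (hT01 : ∀ ω, T ω = 0 ∨ T ω = 1)
    (hZhalf : μ[Z | MeasurableSpace.comap X inferInstance] =ᵐ[μ] fun _ => (1 / 2 : ℝ)) :
    ∀ θ : 𝓧 → ℝ, Measurable θ → (∃ C, ∀ x, |θ x| ≤ C) →
      (∫ ω, ((Y ω - q0 (X ω)) * (Z ω - 1 / 2) - θ (X ω) * β0 (X ω)) ^ 2 ∂μ)
        = (1 / 4) * ∫ ω, (Y ω - q0 (X ω) - θ (X ω) * (h0 (Z ω, X ω) - p0 (X ω))) ^ 2 ∂μ := by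
  intro θ hθm hθbdd
  -- integrability facts (before introducing local σ-algebras, to avoid instance clashes)
  have hH1m : Measurable (fun x : 𝓧 => h0 (1, x)) :=
    hh0m.comp (measurable_const.prodMk measurable_id)
  have hH0m : Measurable (fun x : 𝓧 => h0 (0, x)) :=
    hh0m.comp (measurable_const.prodMk measurable_id)
  obtain ⟨Ch, hCh⟩ := hh0bdd
  have bH1 : ∃ C, ∀ ω, |h0 (1, X ω)| ≤ C := ⟨Ch, fun ω => hCh _⟩
  have bH0 : ∃ C, ∀ ω, |h0 (0, X ω)| ≤ C := ⟨Ch, fun ω => hCh _⟩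
  have bp0X : ∃ C, ∀ ω, |p0 (X ω)| ≤ C := hp0bdd.imp fun C h ω => h _
  have iZ : Integrable Z μ := intg_of_bdd hZ hZbdd
  have iT : Integrable T μ := intg_of_bdd hT hTbdd
  have ip0X : Integrable (fun ω => p0 (X ω)) μ := intg_of_bdd (hp0m.comp hX) bp0X
  have iH0 : Integrable (fun ω => h0 (0, X ω)) μ := intg_of_bdd (hH0m.comp hX) bH0
  have iΔZ : Integrable ((fun ω => h0 (1, X ω) - h0 (0, X ω)) * Z) μ :=
    intg_of_bdd (((hH1m.comp hX).sub (hH0m.comp hX)).mul hZ)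
      (bdd_mul' (bdd_sub' bH1 bH0) hZbdd)
  have iTp : Integrable (fun ω => T ω - p0 (X ω)) μ := intg_of_bdd (hT.sub (hp0m.comp hX))
    (bdd_sub' hTbdd bp0X)
  have bZhalf : ∃ C, ∀ ω, |Z ω - 1 / 2| ≤ C :=
    bdd_sub' hZbdd ⟨1 / 2, fun _ => le_of_eq (abs_of_nonneg (by norm_num))⟩
  have iprod : Integrable ((fun ω => Z ω - 1 / 2) * fun ω => T ω - p0 (X ω)) μ :=
    intg_of_bdd ((hZ.sub measurable_const).mul (hT.sub (hp0m.comp hX)))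
      (bdd_mul' bZhalf (bdd_sub' hTbdd bp0X))
  have iΔ4 : Integrable (fun ω => (h0 (1, X ω) - h0 (0, X ω)) / 4) μ :=
    (intg_of_bdd ((hH1m.comp hX).sub (hH0m.comp hX)) (bdd_sub' bH1 bH0)).div_const 4
  -- σ-algebras
  set m1 : MeasurableSpace Ω := MeasurableSpace.comap X inferInstance with hm1def
  set m2 : MeasurableSpace Ω := MeasurableSpace.comap (fun ω => (Z ω, X ω)) inferInstance
    with hm2def
  have hm1 : m1 ≤ _ := hX.comap_le
  have hm2 : m2 ≤ _ := (hZ.prodMk hX).comap_le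
  have key : ((inferInstance : MeasurableSpace 𝓧).comap Prod.snd).comap
      (fun ω => (Z ω, X ω)) = MeasurableSpace.comap X inferInstance :=
    MeasurableSpace.comap_comp
  have hm12 : m1 ≤ m2 := by
    rw [hm1def, hm2def, ← key]
    exact MeasurableSpace.comap_mono measurable_snd.comap_le
  have hXm1 : Measurable[m1] X := Measurable.of_comap_le le_rfl
  have hZXm2 : Measurable[m2] (fun ω => (Z ω, X ω)) := Measurable.of_comap_le le_rfl
  have compX : ∀ {g : 𝓧 → ℝ}, Measurable g → StronglyMeasurable[m1] (fun ω => g (X ω)) :=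
    fun hg => (hg.comp hXm1).stronglyMeasurable
  -- the conditional expectation of T given X, in terms of h0
  have pform : (fun ω => p0 (X ω)) =ᵐ[μ]
      fun ω => h0 (0, X ω) + (h0 (1, X ω) - h0 (0, X ω)) * (1 / 2) := by
    calc (fun ω => p0 (X ω))
        =ᵐ[μ] μ[T | m1] := hp0
      _ =ᵐ[μ] μ[μ[T | m2] | m1] := (condExp_condExp_of_le hm12 hm2).symm
      _ =ᵐ[μ] μ[(fun ω => h0 (Z ω, X ω)) | m1] := condExp_congr_ae hh0.symm
      _ =ᵐ[μ] μ[(fun ω => h0 (0, X ω)) +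
            (fun ω => h0 (1, X ω) - h0 (0, X ω)) * Z | m1] := by
          refine condExp_congr_ae (Filter.Eventually.of_forall fun ω => ?_)
          rcases hZ01 ω with h | h <;> simp [h] <;> ring
      _ =ᵐ[μ] μ[(fun ω => h0 (0, X ω)) | m1] +
            μ[(fun ω => h0 (1, X ω) - h0 (0, X ω)) * Z | m1] := condExp_add iH0 iΔZ m1
      _ =ᵐ[μ] fun ω => h0 (0, X ω) + (h0 (1, X ω) - h0 (0, X ω)) * (1 / 2) := by
          have hmul := condExp_mul_of_stronglyMeasurable_left
            (m := m1) (μ := μ) (compX (hH1m.sub hH0m)) iΔZ iZ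
          rw [condExp_of_stronglyMeasurable hm1 (compX hH0m) iH0]
          filter_upwards [hmul, hZhalf] with ω h1 h2
          have h1' : (μ[(fun ω => h0 (1, X ω) - h0 (0, X ω)) * Z | m1]) ω
              = (h0 (1, X ω) - h0 (0, X ω)) * (μ[Z | m1]) ω := h1
          have h2' : (μ[Z | m1]) ω = 1 / 2 := h2
          show h0 (0, X ω) + (μ[(fun ω => h0 (1, X ω) - h0 (0, X ω)) * Z | m1]) ω
              = h0 (0, X ω) + (h0 (1, X ω) - h0 (0, X ω)) * (1 / 2)
          rw [h1', h2']
  -- key pointwise consequence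
  have Gconst : (fun ω => (Z ω - 1 / 2) * (h0 (Z ω, X ω) - p0 (X ω))) =ᵐ[μ]
      fun ω => (h0 (1, X ω) - h0 (0, X ω)) / 4 := by
    filter_upwards [pform] with ω hp
    have hp' : p0 (X ω) = h0 (0, X ω) + (h0 (1, X ω) - h0 (0, X ω)) * (1 / 2) := hp
    show (Z ω - 1 / 2) * (h0 (Z ω, X ω) - p0 (X ω)) = (h0 (1, X ω) - h0 (0, X ω)) / 4
    rcases hZ01 ω with h | h <;> rw [h, hp'] <;> ring
  -- conditional expectation given (Z, X)
  have inner : μ[(fun ω => (T ω - p0 (X ω)) * (Z ω - 1 / 2)) | m2] =ᵐ[μ]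
      fun ω => (Z ω - 1 / 2) * (h0 (Z ω, X ω) - p0 (X ω)) := by
    have heq : (fun ω => (T ω - p0 (X ω)) * (Z ω - 1 / 2))
        = (fun ω => Z ω - 1 / 2) * fun ω => T ω - p0 (X ω) := funext fun ω => mul_comm _ _
    rw [heq]
    have sZ2 : StronglyMeasurable[m2] (fun ω => Z ω - 1 / 2) :=
      ((measurable_fst.comp hZXm2).sub measurable_const).stronglyMeasurable
    have sp0m2 : StronglyMeasurable[m2] (fun ω => p0 (X ω)) :=
      (hp0m.comp (measurable_snd.comp hZXm2)).stronglyMeasurable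
    have hp2 : μ[(fun ω => p0 (X ω)) | m2] = fun ω => p0 (X ω) :=
      condExp_of_stronglyMeasurable hm2 sp0m2 ip0X
    calc μ[(fun ω => Z ω - 1 / 2) * (fun ω => T ω - p0 (X ω)) | m2]
        =ᵐ[μ] (fun ω => Z ω - 1 / 2) * μ[(fun ω => T ω - p0 (X ω)) | m2] :=
          condExp_mul_of_stronglyMeasurable_left sZ2 iprod iTp
      _ =ᵐ[μ] fun ω => (Z ω - 1 / 2) * (h0 (Z ω, X ω) - p0 (X ω)) := by
          have hsub := condExp_sub (m := m2) (μ := μ) iT ip0X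
          filter_upwards [hsub, hh0] with ω h1 h2
          have h1' : (μ[(fun ω => T ω - p0 (X ω)) | m2]) ω
              = (μ[T | m2]) ω - (μ[(fun ω => p0 (X ω)) | m2]) ω := h1
          have h2' : h0 (Z ω, X ω) = (μ[T | m2]) ω := h2
          show (Z ω - 1 / 2) * (μ[(fun ω => T ω - p0 (X ω)) | m2]) ω
              = (Z ω - 1 / 2) * (h0 (Z ω, X ω) - p0 (X ω))
          rw [h1', hp2, ← h2']
  -- β0 in closed form
  have E1 : (fun ω => β0 (X ω)) =ᵐ[μ]
      fun ω => (Z ω - 1 / 2) * (h0 (Z ω, X ω) - p0 (X ω)) := by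
    have r0half : (fun ω => r0 (X ω)) =ᵐ[μ] fun _ => (1 / 2 : ℝ) := hr0.trans hZhalf
    calc (fun ω => β0 (X ω))
        =ᵐ[μ] μ[(fun ω => (T ω - p0 (X ω)) * (Z ω - r0 (X ω))) | m1] := hβ0
      _ =ᵐ[μ] μ[(fun ω => (T ω - p0 (X ω)) * (Z ω - 1 / 2)) | m1] := by
          refine condExp_congr_ae ?_
          filter_upwards [r0half] with ω h
          have h' : r0 (X ω) = 1 / 2 := h
          show (T ω - p0 (X ω)) * (Z ω - r0 (X ω)) = (T ω - p0 (X ω)) * (Z ω - 1 / 2)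
          rw [h']
      _ =ᵐ[μ] μ[μ[(fun ω => (T ω - p0 (X ω)) * (Z ω - 1 / 2)) | m2] | m1] :=
          (condExp_condExp_of_le hm12 hm2).symm
      _ =ᵐ[μ] μ[(fun ω => (h0 (1, X ω) - h0 (0, X ω)) / 4) | m1] :=
          condExp_congr_ae (inner.trans Gconst)
      _ =ᵐ[μ] fun ω => (h0 (1, X ω) - h0 (0, X ω)) / 4 := by
          rw [condExp_of_stronglyMeasurable hm1 (compX (g := fun x => (h0 (1, x) - h0 (0, x)) / 4) ((hH1m.sub hH0m).div_const 4)) iΔ4]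
      _ =ᵐ[μ] fun ω => (Z ω - 1 / 2) * (h0 (Z ω, X ω) - p0 (X ω)) := Gconst.symm
  -- conclusion
  have final : ∀ᵐ ω ∂μ, ((Y ω - q0 (X ω)) * (Z ω - 1 / 2) - θ (X ω) * β0 (X ω)) ^ 2
      = 1 / 4 * (Y ω - q0 (X ω) - θ (X ω) * (h0 (Z ω, X ω) - p0 (X ω))) ^ 2 := by
    filter_upwards [E1] with ω h
    have h' : β0 (X ω) = (Z ω - 1 / 2) * (h0 (Z ω, X ω) - p0 (X ω)) := h
    have hz : (Z ω - 1 / 2) ^ 2 = 1 / 4 := by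
      rcases hZ01 ω with h'' | h'' <;> rw [h''] <;> norm_num
    calc ((Y ω - q0 (X ω)) * (Z ω - 1 / 2) - θ (X ω) * β0 (X ω)) ^ 2
        = (Z ω - 1 / 2) ^ 2
            * (Y ω - q0 (X ω) - θ (X ω) * (h0 (Z ω, X ω) - p0 (X ω))) ^ 2 := by
          rw [h']; ring
      _ = 1 / 4 * (Y ω - q0 (X ω) - θ (X ω) * (h0 (Z ω, X ω) - p0 (X ω))) ^ 2 := by
          rw [hz]
  rw [integral_congr_ae final, integral_const_mul]
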